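/- Let Q ⊂ P^N be a smooth quadric hypersurface of dimension N−1 over a C_r field k, and let 0 ≤ s ≤ ⌊(N−1)/2⌋. If N − 2s + 1 > 2^r, then through any k-rational point of Q there is a linear subspace of dimension s defined over k and contained in Q. -/

import Mathlib

open MvPolynomial

set_option synthInstance.maxHeartbeats 1000000
set_option maxHeartbeats 1000000

lemma finsupp_degree_two {ι : Type*} (d : ι →₀ ℕ) (hd : d.degree = 2) :
    ∃ i j, d = Finsupp.single i 1 + Finsupp.single j 1 := by
  have hcard : Multiset.card d.toMultiset = 2 := by
    rw [Finsupp.card_toMultiset]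
    simpa [Finsupp.degree_apply, Finsupp.sum] using hd
  obtain ⟨i, j, hij⟩ := Multiset.card_eq_two.mp hcard
  classical
  refine ⟨i, j, ?_⟩
  have h2 := congrArg Multiset.toFinsupp hij
  rw [Finsupp.toMultiset_toFinsupp] at h2
  rw [h2]
  ext a
  simp [Multiset.toFinsupp_apply, Multiset.insert_eq_cons, Multiset.count_cons,
    Multiset.count_singleton, Finsupp.single_apply]
  simp only [eq_comm]
  omega

lemma homog2_ind {k : Type} [Field k] {n : ℕ} (P : MvPolynomial (Fin n) k → Prop)
    (h0 : P 0) (hadd : ∀ p q, P p → P q → P (p + q))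
    (hmono : ∀ (c : k) i j, P (C c * X i * X j))
    {f : MvPolynomial (Fin n) k} (hf : f.IsHomogeneous 2) : P f := by
  rw [← f.support_sum_monomial_coeff]
  refine Finset.sum_induction _ P hadd h0 ?_
  intro d hd
  have hdeg : d.degree = 2 := by
    by_contra h
    exact mem_support_iff.mp hd (hf.coeff_eq_zero h)
  obtain ⟨i, j, rfl⟩ := finsupp_degree_two d hdeg
  have : monomial (Finsupp.single i 1 + Finsupp.single j 1)
      (coeff (Finsupp.single i 1 + Finsupp.single j 1) f)
      = C (coeff (Finsupp.single i 1 + Finsupp.single j 1) f) * X i * X j := by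
    rw [C_apply, X, X, monomial_mul, monomial_mul, zero_add, mul_one, mul_one]
  rw [this]
  exact hmono _ _ _

variable {k : Type} [Field k] {n : ℕ}

lemma eval_homog2_smul {f : MvPolynomial (Fin n) k} (hf : f.IsHomogeneous 2)
    (a : k) (u : Fin n → k) : eval (a • u) f = a ^ 2 * eval u f := by
  revert a u
  refine homog2_ind (fun f => ∀ (a : k) (u : Fin n → k), eval (a • u) f = a ^ 2 * eval u f)
    (by simp) (fun p q hp hq a u => by simp [hp a u, hq a u]; ring) ?_ hf
  intro c i j a u
  simp only [map_mul, eval_C, eval_X, Pi.smul_apply, smul_eq_mul]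
  ring

lemma eval_homog2_polar_add {f : MvPolynomial (Fin n) k} (hf : f.IsHomogeneous 2)
    (u v w : Fin n → k) :
    eval (u + v + w) f + eval u f + eval v f + eval w f
      = eval (u + v) f + eval (u + w) f + eval (v + w) f := by
  revert u v w
  refine homog2_ind (fun f => ∀ u v w : Fin n → k,
      eval (u + v + w) f + eval u f + eval v f + eval w f
        = eval (u + v) f + eval (u + w) f + eval (v + w) f)
    (by simp) (fun p q hp hq u v w => by
      simp only [map_add]
      linear_combination hp u v w + hq u v w) ?_ hf
  intro c i j u v w
  simp only [map_mul, eval_C, eval_X, Pi.add_apply]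
  ring

lemma eval_homog2_polar_smul {f : MvPolynomial (Fin n) k} (hf : f.IsHomogeneous 2)
    (a : k) (u v : Fin n → k) :
    eval (a • u + v) f + a * eval u f + a * eval v f
      = a * eval (u + v) f + eval (a • u) f + eval v f := by
  revert a u v
  refine homog2_ind (fun f => ∀ (a : k) (u v : Fin n → k),
      eval (a • u + v) f + a * eval u f + a * eval v f
        = a * eval (u + v) f + eval (a • u) f + eval v f)
    (by simp) (fun p q hp hq a u v => by
      simp only [map_add]
      linear_combination hp a u v + hq a u v) ?_ hf
  intro c i j a u v
  simp only [map_mul, eval_C, eval_X, Pi.add_apply, Pi.smul_apply, smul_eq_mul]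
  ring

/-- The polar form of a quadratic polynomial. -/
noncomputable def qpolar (f : MvPolynomial (Fin n) k) (u v : Fin n → k) : k :=
  eval (u + v) f - eval u f - eval v f

lemma qpolar_comm (f : MvPolynomial (Fin n) k) (u v : Fin n → k) :
    qpolar f u v = qpolar f v u := by
  simp only [qpolar, add_comm u v]; ring

lemma qpolar_add_left {f : MvPolynomial (Fin n) k} (hf : f.IsHomogeneous 2)
    (u u' v : Fin n → k) : qpolar f (u + u') v = qpolar f u v + qpolar f u' v := by
  simp only [qpolar]
  linear_combination eval_homog2_polar_add hf u u' v

lemma qpolar_smul_left {f : MvPolynomial (Fin n) k} (hf : f.IsHomogeneous 2)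
    (a : k) (u v : Fin n → k) : qpolar f (a • u) v = a * qpolar f u v := by
  simp only [qpolar]
  linear_combination eval_homog2_polar_smul hf a u v
    + eval_homog2_smul hf a u - (eval_homog2_smul hf a u)

/-- The polar form as a linear map in the second variable. -/
noncomputable def qpolarLin {f : MvPolynomial (Fin n) k} (hf : f.IsHomogeneous 2)
    (u : Fin n → k) : (Fin n → k) →ₗ[k] k where
  toFun v := qpolar f u v
  map_add' v v' := by
    show qpolar f u (v + v') = qpolar f u v + qpolar f u v'
    rw [qpolar_comm f u (v + v'), qpolar_add_left hf, qpolar_comm f v u, qpolar_comm f v' u]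
  map_smul' a v := by
    show qpolar f u (a • v) = a • qpolar f u v
    rw [qpolar_comm f u (a • v), qpolar_smul_left hf, qpolar_comm f v u]
    simp

lemma eval_homog2_expand {f : MvPolynomial (Fin n) k} (hf : f.IsHomogeneous 2)
    (w u : Fin n → k) (a : k) :
    eval (w + a • u) f = eval w f + a ^ 2 * eval u f + a * qpolar f w u := by
  have h1 : qpolar f w (a • u) = a * qpolar f w u := by
    rw [qpolar_comm, qpolar_smul_left hf, qpolar_comm]
  have h2 : eval (w + a • u) f = eval w f + eval (a • u) f + qpolar f w (a • u) := by
    simp only [qpolar]; ring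
  rw [h2, h1, eval_homog2_smul hf]

/-- A field `k` is a `C_r` field (for a real number `r ≥ 0`) if every homogeneous polynomial
of degree `d > 0` in more than `d^r` variables over `k` has a nontrivial zero in `k`. -/
def IsCrField (k : Type) [Field k] (r : ℝ) : Prop :=
  ∀ (N d : ℕ), 0 < d → ((d : ℝ) ^ r < (N : ℝ)) →
    ∀ f : MvPolynomial (Fin N) k, f.IsHomogeneous d →
      ∃ x : Fin N → k, x ≠ 0 ∧ eval x f = 0

lemma extend_isotropic (r : ℝ) (hk : IsCrField k r) {N t : ℕ}
    {f : MvPolynomial (Fin (N + 1)) k} (hf : f.IsHomogeneous 2)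
    (hnum : (2 : ℝ) ^ r < (N : ℝ) - 2 * t - 1)
    (W : Submodule k (Fin (N + 1) → k)) (hWrank : Module.finrank k W = t + 1)
    (hiso : ∀ y ∈ W, eval y f = 0) :
    ∃ W' : Submodule k (Fin (N + 1) → k), W ≤ W' ∧ Module.finrank k W' = t + 2 ∧
      ∀ y ∈ W', eval y f = 0 := by
  classical
  obtain b := Module.finBasisOfFinrankEq k W hWrank
  set Φ : (Fin (N + 1) → k) →ₗ[k] (Fin (t + 1) → k) :=
    LinearMap.pi (fun i => qpolarLin hf ((b i : Fin (N + 1) → k))) with hΦ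
  set V' := LinearMap.ker Φ with hV'
  have hWle : W ≤ V' := by
    intro w hw
    rw [LinearMap.mem_ker]
    funext i
    show qpolar f (b i : Fin (N + 1) → k) w = 0
    simp only [qpolar]
    rw [hiso _ (add_mem (b i).2 hw), hiso _ (b i).2, hiso _ hw]; ring
  have hker : ∀ u ∈ V', ∀ w ∈ W, qpolar f w u = 0 := by
    intro u hu w hw
    have hWspan : W = Submodule.span k (Set.range (fun i => (b i : Fin (N + 1) → k))) := by
      conv_lhs => rw [← Submodule.map_subtype_top W, ← b.span_eq]
      rw [Submodule.map_span]
      congr 1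
      rw [← Set.range_comp]
      rfl
    have hle : W ≤ LinearMap.ker (qpolarLin hf u) := by
      rw [hWspan, Submodule.span_le]
      rintro _ ⟨i, rfl⟩
      rw [SetLike.mem_coe, LinearMap.mem_ker]
      show qpolar f u (b i : Fin (N + 1) → k) = 0
      rw [qpolar_comm]
      have : Φ u i = 0 := by rw [LinearMap.mem_ker] at hu; rw [hu]; rfl
      exact this
    rw [qpolar_comm]
    exact hle hw
  -- dimension bookkeeping
  have h1 := LinearMap.finrank_range_add_finrank_ker Φ
  rw [Module.finrank_fin_fun, ← hV'] at h1
  have h2 : Module.finrank k (LinearMap.range Φ) ≤ t + 1 :=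
    (Submodule.finrank_le _).trans_eq (Module.finrank_fin_fun k)
  set W₀ : Submodule k V' := W.comap V'.subtype with hW₀
  obtain ⟨U₀, hU₀⟩ := Submodule.exists_isCompl W₀
  have h3 := Submodule.finrank_add_eq_of_isCompl hU₀
  have h4 : Module.finrank k W₀ = t + 1 := by
    rw [← hWrank]; exact (Submodule.comapSubtypeEquivOfLe hWle).finrank_eq
  set U : Submodule k (Fin (N + 1) → k) := U₀.map V'.subtype with hU
  have h5 : Module.finrank k U = Module.finrank k U₀ :=
    Submodule.finrank_map_subtype_eq V' U₀
  set m := Module.finrank k U with hm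
  have hmN : N ≤ m + 2 * t + 1 := by omega
  -- the restricted polynomial
  set c : Fin m → (Fin (N + 1) → k) := fun j => ((Module.finBasis k U) j : Fin (N + 1) → k)
    with hc
  set σp : Fin (N + 1) → MvPolynomial (Fin m) k :=
    fun i => ∑ j, MvPolynomial.C (c j i) * MvPolynomial.X j with hσp
  have hσ1 : ∀ i, (σp i).IsHomogeneous 1 := fun i =>
    IsHomogeneous.sum _ _ _ (fun j _ => isHomogeneous_C_mul_X _ _)
  set g := MvPolynomial.aeval σp f with hgdef
  have hghom : g.IsHomogeneous 2 := by
    have := hf.aeval σp hσ1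
    rwa [one_mul] at this
  have hm2 : ((2 : ℕ) : ℝ) ^ r < (m : ℝ) := by
    have hcast : (N : ℝ) ≤ (m : ℝ) + 2 * t + 1 := by exact_mod_cast hmN
    push_cast
    linarith
  obtain ⟨y, hy0, hyg⟩ := hk m 2 (by norm_num) hm2 g hghom
  have heval : ∀ z : Fin m → k, eval z g = eval (fun i => ∑ j, c j i * z j) f := by
    intro z
    rw [hgdef, aeval_def, eval_eval₂]
    have hcomp : (eval z).comp (algebraMap k (MvPolynomial (Fin m) k)) = RingHom.id k := by
      ext a; simp
    rw [hcomp, eval₂_id]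
    have harg : (fun s => eval z (σp s)) = fun i => ∑ j, c j i * z j := by
      funext i
      simp [hσp]
    rw [harg]
  set uU : U := ∑ j, y j • (Module.finBasis k U) j with huU
  set u : Fin (N + 1) → k := (uU : Fin (N + 1) → k) with hu
  have hucoord : u = fun i => ∑ j, c j i * y j := by
    funext i
    rw [hu, huU]
    push_cast
    simp [Finset.sum_apply, mul_comm, hc]
  have hfu : eval u f = 0 := by
    rw [hucoord, ← heval y]; exact hyg
  have hu0 : u ≠ 0 := by
    intro h
    have h0 : uU = 0 := by
      rw [← Submodule.coe_eq_zero, ← hu]; exact h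
    have hli := (Module.finBasis k U).linearIndependent
    rw [Fintype.linearIndependent_iff] at hli
    exact hy0 (funext (hli y (by rw [← huU, h0])))
  have huU' : u ∈ U := by rw [hu]; exact uU.2
  have huV' : u ∈ V' := Submodule.map_subtype_le V' U₀ huU'
  have hunotW : u ∉ W := by
    intro hWmem
    obtain ⟨v0, hv0, hv0u⟩ := huU'
    have hvW : v0 ∈ W₀ := by
      rw [hW₀, Submodule.mem_comap]
      show V'.subtype v0 ∈ W
      rw [hv0u]; exact hWmem
    have : v0 ∈ W₀ ⊓ U₀ := ⟨hvW, hv0⟩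
    rw [hU₀.inf_eq_bot, Submodule.mem_bot] at this
    apply hu0
    rw [← hv0u, this]; simp
  refine ⟨W ⊔ Submodule.span k {u}, le_sup_left, ?_, ?_⟩
  · have hinf : W ⊓ Submodule.span k {u} = ⊥ := by
      rw [eq_bot_iff]
      rintro z ⟨hzW, hzu⟩
      obtain ⟨a, rfl⟩ := Submodule.mem_span_singleton.mp hzu
      rcases eq_or_ne a 0 with rfl | ha
      · simp
      · exact absurd (by simpa [smul_smul, inv_mul_cancel₀ ha] using W.smul_mem a⁻¹ hzW)
          hunotW
    have hsum := Submodule.finrank_sup_add_finrank_inf_eq W (Submodule.span k {u})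
    rw [hinf, hWrank, finrank_span_singleton hu0] at hsum
    simp only [finrank_bot] at hsum
    omega
  · rintro z hz
    obtain ⟨w, hw, z', hz', rfl⟩ := Submodule.mem_sup.mp hz
    obtain ⟨a, rfl⟩ := Submodule.mem_span_singleton.mp hz'
    rw [eval_homog2_expand hf w u a, hiso w hw, hfu, hker u huV' w hw]
    ring

lemma isotropic_through_point (r : ℝ) (hk : IsCrField k r) {N : ℕ}
    {f : MvPolynomial (Fin (N + 1)) k} (hf : f.IsHomogeneous 2)
    (x : Fin (N + 1) → k) (hx0 : x ≠ 0) (hx : eval x f = 0) :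
    ∀ s : ℕ, (2 : ℝ) ^ r < (N : ℝ) - 2 * (s : ℝ) + 1 →
    ∃ W : Submodule k (Fin (N + 1) → k),
      Module.finrank k W = s + 1 ∧ x ∈ W ∧ ∀ y ∈ W, eval y f = 0 := by
  intro s
  induction s with
  | zero =>
    intro _
    refine ⟨Submodule.span k {x}, ?_, Submodule.mem_span_singleton_self x, ?_⟩
    · exact finrank_span_singleton hx0
    · intro y hy
      obtain ⟨a, rfl⟩ := Submodule.mem_span_singleton.mp hy
      rw [show a • x = (0 : Fin (N + 1) → k) + a • x by simp,
        eval_homog2_expand hf 0 x a, hx]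
      have h0 : constantCoeff f = 0 := hf.coeff_eq_zero (by simp)
      simp [qpolar, ← constantCoeff_eq, h0]
  | succ s ih =>
    intro hnum
    have hcast : ((s : ℝ) + 1) = ((s + 1 : ℕ) : ℝ) := by push_cast; ring
    obtain ⟨W, hWr, hxW, hWiso⟩ := ih (by push_cast at hnum ⊢; linarith)
    obtain ⟨W', hWW', hW'r, hW'iso⟩ := extend_isotropic r hk hf
      (by push_cast at hnum ⊢; linarith) W hWr hWiso
    exact ⟨W', by omega, hWW' hxW, hW'iso⟩

/-- Let `Q = {f = 0} ⊂ ℙ^N` be a smooth quadric hypersurface of dimension `N − 1` over a `C_r`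
field `k` and let `0 ≤ s ≤ ⌊(N−1)/2⌋`.  If `N − 2s + 1 > 2^r`, then through any `k`-rational
point of `Q` there is a linear subspace of dimension `s` defined over `k` and contained
in `Q`.  (Projective `s`-planes through `[x]` contained in `Q` correspond to
`(s+1)`-dimensional linear subspaces `W ∋ x` of `k^{N+1}` on which `f` vanishes;
smoothness is expressed by the nonvanishing of the gradient of `f` at the nonzero points of
the affine cone over the algebraic closure of `k`.) -/
theorem smooth_quadric_linear_subspace_through_point (k : Type) [Field k]
    (r : ℝ) (hr : 0 ≤ r) (hk : IsCrField k r) (N s : ℕ)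
    (hs : 2 * s + 1 ≤ N)
    (f : MvPolynomial (Fin (N + 1)) k) (hf : f.IsHomogeneous 2)
    (hsmooth : ∀ x : Fin (N + 1) → AlgebraicClosure k, x ≠ 0 →
      ∃ i, eval x (MvPolynomial.map (algebraMap k (AlgebraicClosure k)) (pderiv i f)) ≠ 0)
    (hnum : (2 : ℝ) ^ r < (N : ℝ) - 2 * (s : ℝ) + 1)
    (x : Fin (N + 1) → k) (hx0 : x ≠ 0) (hx : eval x f = 0) :
    ∃ W : Submodule k (Fin (N + 1) → k),
      Module.finrank k W = s + 1 ∧ x ∈ W ∧ ∀ y ∈ W, eval y f = 0 :=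
  isotropic_through_point r hk hf x hx0 hx s hnum
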